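/- Let Ω ⊆ ℝ^N be open, a, b ∈ ℂ with Re(a) > 0 or Im(a) ≠ 0, Im(b) ≠ 0, V ∈ L^∞(Ω), and F ∈ L^∞(Ω). Suppose u ∈ H^1(Ω) ∩ L^1(Ω) satisfies the two energy estimates: ‖∇u‖²_{L²} + Re(a)‖u‖_{L¹} + (Re(b) − ‖V‖_∞)‖u‖²_{L²} ≤ ∫|F u| dx and |Im(a)|‖u‖_{L¹} + |Im(b)|‖u‖²_{L²} ≤ ∫|F u| dx. Then there exists M > 0, depending only on |a|, |b|, ‖Re(V)‖_∞, such that if ‖F‖_{L^∞(Ω)} ≤ 1/M then u = 0 a.e. in Ω. -/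

import Mathlib

set_option maxHeartbeats 1000000


open MeasureTheory Complex
open scoped ENNReal

/-- Core of the null-solution theorem: if `u ∈ H¹(Ω) ∩ L¹(Ω)` satisfies the two energy
estimates, then there is `M > 0`, depending only on `a`, `b` and the `L^∞` bound of the
potential, such that `‖F‖_{L^∞} ≤ 1/M` forces `u = 0` a.e. in `Ω`. -/
theorem null_solution_from_energy_estimates
    (a b : ℂ) (ha : 0 < a.re ∨ a.im ≠ 0) (hb : b.im ≠ 0) (Vn : ℝ) (hVn : 0 ≤ Vn) :
    ∃ M : ℝ, 0 < M ∧
      ∀ (N : ℕ) (Ω : Set (EuclideanSpace ℝ (Fin N))), IsOpen Ω →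
        ∀ (F u : EuclideanSpace ℝ (Fin N) → ℂ)
          (du : EuclideanSpace ℝ (Fin N) → (EuclideanSpace ℝ (Fin N) →L[ℝ] ℂ)),
          MemLp F ∞ (volume.restrict Ω) →
          MemLp u 1 (volume.restrict Ω) →
          MemLp u 2 (volume.restrict Ω) →
          MemLp du 2 (volume.restrict Ω) →
          ((eLpNorm du 2 (volume.restrict Ω)).toReal ^ 2
              + a.re * (eLpNorm u 1 (volume.restrict Ω)).toReal
              + (b.re - Vn) * (eLpNorm u 2 (volume.restrict Ω)).toReal ^ 2
            ≤ ∫ x, ‖F x * u x‖ ∂(volume.restrict Ω)) →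
          (|a.im| * (eLpNorm u 1 (volume.restrict Ω)).toReal
              + |b.im| * (eLpNorm u 2 (volume.restrict Ω)).toReal ^ 2
            ≤ ∫ x, ‖F x * u x‖ ∂(volume.restrict Ω)) →
          (eLpNorm F ∞ (volume.restrict Ω)).toReal ≤ 1 / M →
          u =ᵐ[volume.restrict Ω] 0 := by
  have hbim : 0 < |b.im| := abs_pos.mpr hb
  -- the combination constant
  set Ca : ℝ := if 0 < a.re then 0 else (1 + |a.re|) / |a.im| with hCa
  set C : ℝ := max ((1 + Vn + |b.re|) / |b.im|) (max Ca 0) with hCdef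
  have hC0 : 0 ≤ C := le_trans (le_max_right _ _) (le_max_right _ _)
  set α : ℝ := a.re + C * |a.im| with hαdef
  have hα : 0 < α := by
    by_cases h : 0 < a.re
    · have : 0 ≤ C * |a.im| := mul_nonneg hC0 (abs_nonneg _)
      linarith
    · have haim : a.im ≠ 0 := ha.resolve_left h
      have haim' : 0 < |a.im| := abs_pos.mpr haim
      have hCge : (1 + |a.re|) / |a.im| ≤ C := by
        have : Ca = (1 + |a.re|) / |a.im| := if_neg h
        calc (1 + |a.re|) / |a.im| = Ca := this.symm
          _ ≤ max Ca 0 := le_max_left _ _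
          _ ≤ C := le_max_right _ _
      have h1 : 1 + |a.re| ≤ C * |a.im| := by
        rw [div_le_iff₀ haim'] at hCge; linarith
      have h2 : -a.re ≤ |a.re| := neg_le_abs _
      simp only [hαdef]; linarith
  have hβ : 1 ≤ (b.re - Vn) + C * |b.im| := by
    have hCge : (1 + Vn + |b.re|) / |b.im| ≤ C := le_max_left _ _
    have h1 : 1 + Vn + |b.re| ≤ C * |b.im| := by
      rw [div_le_iff₀ hbim] at hCge; linarith
    have h2 : -b.re ≤ |b.re| := neg_le_abs _
    linarith
  refine ⟨2 * (1 + C) / α, by positivity, ?_⟩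
  intro N Ω hΩ F u du hF hu1 hu2 hdu hE1 hE2 hFM
  set μ : Measure (EuclideanSpace ℝ (Fin N)) := volume.restrict Ω with hμ
  set K : ℝ := (eLpNorm F ∞ μ).toReal with hK
  set L : ℝ := (eLpNorm u 1 μ).toReal with hL
  set S : ℝ := (eLpNorm u 2 μ).toReal with hS
  set D : ℝ := (eLpNorm du 2 μ).toReal with hD
  have hK0 : 0 ≤ K := ENNReal.toReal_nonneg
  have hL0 : 0 ≤ L := ENNReal.toReal_nonneg
  have hS0 : 0 ≤ S := ENNReal.toReal_nonneg
  have hD0 : 0 ≤ D := ENNReal.toReal_nonneg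
  have huint : Integrable u μ := memLp_one_iff_integrable.mp hu1
  -- a.e. bound on F
  have hFae : ∀ᵐ x ∂μ, ‖F x‖ ≤ K := by
    have h1 : ∀ᵐ x ∂μ, (‖F x‖₊ : ℝ≥0∞) ≤ eLpNorm F ∞ μ := by
      rw [eLpNorm_exponent_top]
      exact ae_le_eLpNormEssSup
    filter_upwards [h1] with x hx
    have hfin : eLpNorm F ∞ μ ≠ ∞ := hF.2.ne
    have := ENNReal.toReal_mono hfin hx
    rw [hK]; simpa using this
  -- L¹ norm as integral
  have hLint : L = ∫ x, ‖u x‖ ∂μ := by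
    rw [hL, eLpNorm_one_eq_lintegral_enorm,
      integral_norm_eq_lintegral_enorm huint.aestronglyMeasurable]
  -- the integral bound
  have hIle : ∫ x, ‖F x * u x‖ ∂μ ≤ K * L := by
    have hmono : ∫ x, ‖F x * u x‖ ∂μ ≤ ∫ x, K * ‖u x‖ ∂μ := by
      refine integral_mono_of_nonneg ?_ (huint.norm.const_mul K) ?_
      · filter_upwards with x; positivity
      · filter_upwards [hFae] with x hx
        rw [norm_mul]
        exact mul_le_mul_of_nonneg_right hx (norm_nonneg _)
    calc ∫ x, ‖F x * u x‖ ∂μ ≤ ∫ x, K * ‖u x‖ ∂μ := hmono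
      _ = K * ∫ x, ‖u x‖ ∂μ := integral_const_mul _ _
      _ = K * L := by rw [hLint]
  set I : ℝ := ∫ x, ‖F x * u x‖ ∂μ with hI
  have hKle : K ≤ α / (2 * (1 + C)) := by
    have : (1 : ℝ) / (2 * (1 + C) / α) = α / (2 * (1 + C)) := by
      rw [one_div_div]
    rw [← this]; exact hFM
  -- combine the two energy estimates
  have hcomb : D ^ 2 + α * L + ((b.re - Vn) + C * |b.im|) * S ^ 2 ≤ (1 + C) * I := by
    have h2 : C * (|a.im| * L + |b.im| * S ^ 2) ≤ C * I :=
      mul_le_mul_of_nonneg_left hE2 hC0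
    nlinarith [hE1]
  have hLz : L = 0 := by
    have hβS : 0 ≤ ((b.re - Vn) + C * |b.im|) * S ^ 2 := by nlinarith
    have hIK : (1 + C) * I ≤ (1 + C) * (K * L) :=
      mul_le_mul_of_nonneg_left hIle (by linarith)
    have hKL : K * L ≤ α / (2 * (1 + C)) * L := mul_le_mul_of_nonneg_right hKle hL0
    have hC1 : (0 : ℝ) < 1 + C := by linarith
    have key : α * L ≤ α / 2 * L := by
      have h3 : (1 + C) * (α / (2 * (1 + C)) * L) = α / 2 * L := by
        field_simp
      nlinarith
    nlinarith
  -- conclude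
  have hfin : eLpNorm u 1 μ ≠ ∞ := hu1.2.ne
  have hz : eLpNorm u 1 μ = 0 := by
    rcases (ENNReal.toReal_eq_zero_iff _).mp hLz with h | h
    · exact h
    · exact absurd h hfin
  exact (eLpNorm_eq_zero_iff hu1.1 one_ne_zero).mp hz
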